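/- Let R be a relative m-cover and σ the involution swapping antipodes. Then χ_R·A₁ = m(q²+1)j − (q²+1)χ_{R^σ}, where A₁ is the 0-1 matrix on external lines with (ℓ,n)-entry 1 iff ℓ and n are not concurrent, n ≠ ℓ̄, and n is concurrent with ℓ̄. -/

import Mathlib

structure GenQuad (P L : Type*) (I : P → L → Prop) (s t : ℕ) : Prop where
  unique_line : ∀ ⦃p q : P⦄, p ≠ q → ∀ ⦃l m : L⦄, I p l → I q l → I p m → I q m → l = m
  point_lines : ∀ p : P, {l : L | I p l}.ncard = t + 1
  line_points : ∀ l : L, {p : P | I p l}.ncard = s + 1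
  gq : ∀ (p : P) (l : L), ¬ I p l → ∃! r : P, I r l ∧ ∃ m : L, I p m ∧ I r m

def Concurrent {P L : Type*} (I : P → L → Prop) (k l : L) : Prop :=
  k ≠ l ∧ ∃ p : P, I p k ∧ I p l

namespace RelCoverAux

/-! ### Generic lemmas about generalized quadrangles -/

section Generic

variable {P L : Type*} {I : P → L → Prop} {s t : ℕ}

/-- Collinearity of points. -/
def Col (I : P → L → Prop) (a b : P) : Prop := ∃ l, I a l ∧ I b l

theorem Col.symm {a b : P} (h : Col I a b) : Col I b a := by
  obtain ⟨l, h1, h2⟩ := h; exact ⟨l, h2, h1⟩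

theorem col_self (h : GenQuad P L I s t) (a : P) : Col I a a := by
  have hpl := h.point_lines a
  have hne : {l : L | I a l}.Nonempty :=
    Set.nonempty_of_ncard_ne_zero (by rw [hpl]; omega)
  obtain ⟨l, hl⟩ := hne
  exact ⟨l, hl, hl⟩

theorem pt_eq (h : GenQuad P L I s t) {l m : L} {a b : P} (hlm : l ≠ m)
    (hal : I a l) (ham : I a m) (hbl : I b l) (hbm : I b m) : a = b := by
  by_contra hab
  exact hlm (h.unique_line hab hal hbl ham hbm)

theorem feet_unique (h : GenQuad P L I s t) {u : P} {l : L} {a b : P}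
    (hul : ¬ I u l) (hal : I a l) (hbl : I b l)
    (hca : Col I u a) (hcb : Col I u b) : a = b := by
  obtain ⟨r, -, hr⟩ := h.gq u l hul
  rw [hr a ⟨hal, hca⟩, hr b ⟨hbl, hcb⟩]

/-- Cardinality of a disjoint union of sets of constant size. -/
theorem ncard_biUnion_const {α β : Type*} [Finite α] [Finite β] {S : Set α} {B : α → Set β}
    {c : ℕ}
    (hdisj : ∀ a ∈ S, ∀ a' ∈ S, a ≠ a' → ∀ x, x ∈ B a → x ∈ B a' → False)
    (hc : ∀ a ∈ S, (B a).ncard = c) :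
    (⋃ a ∈ S, B a).ncard = S.ncard * c := by
  classical
  cases nonempty_fintype α; cases nonempty_fintype β
  have hU : (Set.toFinite (⋃ a ∈ S, B a)).toFinset
      = (Set.toFinite S).toFinset.biUnion (fun a => (Set.toFinite (B a)).toFinset) := by
    ext x
    constructor
    · intro hx
      rw [Set.Finite.mem_toFinset, Set.mem_iUnion₂] at hx
      obtain ⟨a, ha, hxa⟩ := hx
      exact Finset.mem_biUnion.2 ⟨a, (Set.Finite.mem_toFinset _).2 ha,
        (Set.Finite.mem_toFinset _).2 hxa⟩
    · intro hx
      obtain ⟨a, ha, hxa⟩ := Finset.mem_biUnion.1 hx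
      rw [Set.Finite.mem_toFinset] at ha hxa
      rw [Set.Finite.mem_toFinset, Set.mem_iUnion₂]
      exact ⟨a, ha, hxa⟩
  have hdisjF : ∀ a ∈ (Set.toFinite S).toFinset, ∀ b ∈ (Set.toFinite S).toFinset, a ≠ b →
      Disjoint ((Set.toFinite (B a)).toFinset) ((Set.toFinite (B b)).toFinset) := by
    intro a ha b hb hab
    rw [Set.Finite.mem_toFinset] at ha hb
    rw [Finset.disjoint_left]
    intro x hxa hxb
    rw [Set.Finite.mem_toFinset] at hxa hxb
    exact hdisj a ha b hb hab x hxa hxb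
  have hcF : ∀ a ∈ (Set.toFinite S).toFinset, ((Set.toFinite (B a)).toFinset).card = c := by
    intro a ha
    rw [Set.Finite.mem_toFinset] at ha
    rw [← Set.ncard_eq_toFinset_card _ (Set.toFinite _)]
    exact hc a ha
  rw [Set.ncard_eq_toFinset_card _ (Set.toFinite _), hU, Finset.card_biUnion hdisjF,
    Finset.sum_congr rfl hcF, Finset.sum_const, smul_eq_mul,
    ← Set.ncard_eq_toFinset_card S (Set.toFinite S)]

/-- The points on lines of a pencil through `x`, with `x` removed. -/
theorem lines_minus_point_ncard (h : GenQuad P L I s t) [Finite P] [Finite L]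
    {x : P} {S : Set L} (hS : ∀ l ∈ S, I x l) :
    (⋃ l ∈ S, ({u : P | I u l} \ {x})).ncard = S.ncard * s := by
  apply ncard_biUnion_const
  · intro l hl l' hl' hne u hu hu'
    have hux : u ≠ x := hu.2
    exact hne (h.unique_line hux hu.1 (hS l hl) hu'.1 (hS l' hl'))
  · intro l hl
    rw [Set.ncard_diff_singleton_of_mem (show x ∈ {u : P | I u l} from hS l hl)
      , h.line_points l]
    omega

/-- The number of common neighbours of two non-collinear points is `t+1`. -/
theorem cn_ncard (h : GenQuad P L I s t) {x z : P} (hxz : ¬ Col I x z) :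
    {u : P | Col I u x ∧ Col I u z}.ncard = t + 1 := by
  classical
  have hex : ∀ l : L, ∃ r : P, I x l → ((I r l ∧ ∃ m, I z m ∧ I r m) ∧
      ∀ y, (I y l ∧ ∃ m, I z m ∧ I y m) → y = r) := by
    intro l
    by_cases hl : I x l
    · have hzl : ¬ I z l := fun hz => hxz ⟨l, hl, hz⟩
      obtain ⟨r, hr1, hr2⟩ := h.gq z l hzl
      exact ⟨r, fun _ => ⟨hr1, hr2⟩⟩
    · exact ⟨x, fun hl' => absurd hl' hl⟩
  choose F hF using hex
  have hF1 : ∀ l : L, I x l → I (F l) l ∧ ∃ m, I z m ∧ I (F l) m := fun l hl => (hF l hl).1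
  have hF2 : ∀ l : L, I x l → ∀ y, (I y l ∧ ∃ m, I z m ∧ I y m) → y = F l :=
    fun l hl => (hF l hl).2
  have himg : {u : P | Col I u x ∧ Col I u z} = F '' {l : L | I x l} := by
    ext u
    constructor
    · rintro ⟨⟨l, hul, hxl⟩, huz⟩
      exact ⟨l, hxl, (hF2 l hxl u ⟨hul, huz.symm⟩).symm⟩
    · rintro ⟨l, hxl, rfl⟩
      obtain ⟨hFl, hm⟩ := hF1 l hxl
      exact ⟨⟨l, hFl, hxl⟩, Col.symm hm⟩
  rw [himg, Set.ncard_image_of_injOn, h.point_lines x]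
  intro l1 h1 l2 h2 heq
  have hu1 := hF1 l1 h1
  have hu2 := hF1 l2 h2
  have hne : F l1 ≠ x := by
    intro hx
    exact hxz (Col.symm (hx ▸ hu1.2))
  have hl2 : I (F l1) l2 := heq ▸ hu2.1
  exact h.unique_line hne hu1.1 h1 hl2 h2

/-- The perp of a point (without the point itself) has `(t+1) * s` elements. -/
theorem perp_ncard (h : GenQuad P L I s t) [Finite P] [Finite L] (p0 : P) :
    {u : P | Col I u p0 ∧ u ≠ p0}.ncard = (t + 1) * s := by
  have hset : {u : P | Col I u p0 ∧ u ≠ p0}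
      = ⋃ l ∈ {l : L | I p0 l}, ({u : P | I u l} \ {p0}) := by
    ext u
    simp only [Set.mem_setOf_eq, Set.mem_iUnion, Set.mem_diff, Set.mem_singleton_iff]
    constructor
    · rintro ⟨⟨l, hul, hpl⟩, hne⟩
      exact ⟨l, hpl, hul, hne⟩
    · rintro ⟨l, hpl, hul, hne⟩
      exact ⟨⟨l, hul, hpl⟩, hne⟩
  rw [hset, lines_minus_point_ncard h (x := p0) (S := {l : L | I p0 l}) (fun l hl => hl),
    h.point_lines p0]

/-- Double counting, inequality version. -/
theorem double_count_le {α β : Type*} [Finite α] [Finite β] {A : Set α} {B : Set β}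
    {rel : α → β → Prop} {ca cb : ℕ}
    (hA : ∀ a ∈ A, {b : β | b ∈ B ∧ rel a b}.ncard = ca)
    (hB : ∀ b ∈ B, {a : α | a ∈ A ∧ rel a b}.ncard ≤ cb) :
    A.ncard * ca ≤ B.ncard * cb := by
  classical
  cases nonempty_fintype α; cases nonempty_fintype β
  set Af := (Set.toFinite A).toFinset with hAfdef
  set Bf := (Set.toFinite B).toFinset with hBfdef
  have hAf : ∀ a ∈ Af, (Bf.filter (fun b => rel a b)).card = ca := by
    intro a ha
    rw [hAfdef, Set.Finite.mem_toFinset] at ha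
    have hseteq : Bf.filter (fun b => rel a b)
        = (Set.toFinite {b : β | b ∈ B ∧ rel a b}).toFinset := by
      ext b; simp [hBfdef, Set.Finite.mem_toFinset, Set.mem_setOf_eq]
    rw [hseteq, ← Set.ncard_eq_toFinset_card _ (Set.toFinite _)]
    exact hA a ha
  have hBf : ∀ b ∈ Bf, (Af.filter (fun a => rel a b)).card ≤ cb := by
    intro b hb
    rw [hBfdef, Set.Finite.mem_toFinset] at hb
    have hseteq : Af.filter (fun a => rel a b)
        = (Set.toFinite {a : α | a ∈ A ∧ rel a b}).toFinset := by
      ext a; simp [hAfdef, Set.Finite.mem_toFinset, Set.mem_setOf_eq]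
    rw [hseteq, ← Set.ncard_eq_toFinset_card _ (Set.toFinite _)]
    exact hB b hb
  have hswap : ∑ a ∈ Af, (Bf.filter (fun b => rel a b)).card
      = ∑ b ∈ Bf, (Af.filter (fun a => rel a b)).card := by
    simp_rw [Finset.card_filter]
    exact Finset.sum_comm
  calc A.ncard * ca = ∑ _a ∈ Af, ca := by
        rw [Finset.sum_const, smul_eq_mul, hAfdef,
          ← Set.ncard_eq_toFinset_card A (Set.toFinite A)]
    _ = ∑ a ∈ Af, (Bf.filter (fun b => rel a b)).card := (Finset.sum_congr rfl hAf).symm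
    _ = ∑ b ∈ Bf, (Af.filter (fun a => rel a b)).card := hswap
    _ ≤ ∑ _b ∈ Bf, cb := Finset.sum_le_sum hBf
    _ = B.ncard * cb := by
        rw [Finset.sum_const, smul_eq_mul, hBfdef,
          ← Set.ncard_eq_toFinset_card B (Set.toFinite B)]

/-- Double counting, equality version. -/
theorem double_count_eq {α β : Type*} [Finite α] [Finite β] {A : Set α} {B : Set β}
    {rel : α → β → Prop} {ca cb : ℕ}
    (hA : ∀ a ∈ A, {b : β | b ∈ B ∧ rel a b}.ncard = ca)
    (hB : ∀ b ∈ B, {a : α | a ∈ A ∧ rel a b}.ncard = cb) :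
    A.ncard * ca = B.ncard * cb := by
  exact le_antisymm (double_count_le hA (fun b hb => (hB b hb).le))
    (by
      have := double_count_le (rel := fun b a => rel a b) hB (fun a ha => (hA a ha).le)
      exact this)

/-- Total number of points of a finite generalized quadrangle of order `(s,t)`. -/
theorem point_count (h : GenQuad P L I s t) [Finite P] [Finite L] (p0 : P) :
    Nat.card P = (s + 1) * (s * t + 1) := by
  classical
  set Dp := {u : P | Col I u p0 ∧ u ≠ p0} with hDpdef
  set Far := {u : P | ¬ Col I u p0} with hFardef
  have hDpcard : Dp.ncard = (t + 1) * s := perp_ncard h p0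
  have hrow : ∀ u ∈ Far, {v : P | v ∈ Dp ∧ Col I u v}.ncard = t + 1 := by
    intro u hu
    have hu' : ¬ Col I u p0 := hu
    have hset : {v : P | v ∈ Dp ∧ Col I u v} = {v : P | Col I v p0 ∧ Col I v u} := by
      ext v
      constructor
      · rintro ⟨⟨h1, -⟩, h2⟩; exact ⟨h1, h2.symm⟩
      · rintro ⟨h1, h2⟩
        refine ⟨⟨h1, ?_⟩, h2.symm⟩
        rintro rfl
        exact hu' h2.symm
    rw [hset]
    exact cn_ncard h (fun hc => hu' hc.symm)
  have hcol : ∀ v ∈ Dp, {u : P | u ∈ Far ∧ Col I u v}.ncard = t * s := by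
    intro v hv
    obtain ⟨⟨lv, hvlv, hp0lv⟩, hvne⟩ := hv
    have hset : {u : P | u ∈ Far ∧ Col I u v}
        = ⋃ mm ∈ ({mm : L | I v mm} \ {lv}), ({u : P | I u mm} \ {v}) := by
      ext u
      simp only [Set.mem_setOf_eq, Set.mem_iUnion, Set.mem_diff, Set.mem_singleton_iff]
      constructor
      · rintro ⟨hfar, mm, hum, hvm⟩
        refine ⟨mm, ⟨hvm, ?_⟩, hum, ?_⟩
        · rintro rfl
          exact hfar ⟨_, hum, hp0lv⟩
        · rintro rfl
          exact hfar ⟨lv, hvlv, hp0lv⟩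
      · rintro ⟨mm, ⟨hvm, hmne⟩, hum, hune⟩
        refine ⟨?_, mm, hum, hvm⟩
        intro hcolu
        have hp0m : ¬ I p0 mm := by
          intro hp0m
          exact hmne (h.unique_line hvne hvm hp0m hvlv hp0lv)
        exact hune (feet_unique h hp0m hum hvm (Col.symm hcolu) ⟨lv, hp0lv, hvlv⟩)
    rw [hset, lines_minus_point_ncard h (x := v) (S := {mm : L | I v mm} \ {lv})
      (fun mm hm => hm.1)]
    rw [Set.ncard_diff_singleton_of_mem (show lv ∈ {mm : L | I v mm} from hvlv)
      , h.point_lines v, Nat.add_sub_cancel]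
  have hdc : Far.ncard * (t + 1) = Dp.ncard * (t * s) :=
    double_count_eq (rel := fun u v => Col I u v) hrow hcol
  have hFarcard : Far.ncard = s * s * t := by
    have h2 : Far.ncard * (t + 1) = (s * s * t) * (t + 1) := by
      rw [hdc, hDpcard]; ring
    exact Nat.eq_of_mul_eq_mul_right (Nat.succ_pos t) h2
  have huniv : (Set.univ : Set P) = insert p0 (Dp ∪ Far) := by
    ext u
    simp only [Set.mem_univ, Set.mem_insert_iff, Set.mem_union, hDpdef, hFardef,
      Set.mem_setOf_eq, true_iff]
    by_cases hc : Col I u p0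
    · by_cases he : u = p0
      · exact Or.inl he
      · exact Or.inr (Or.inl ⟨hc, he⟩)
    · exact Or.inr (Or.inr hc)
  have hp0nm : p0 ∉ Dp ∪ Far := by
    rintro (⟨-, hne⟩ | hfar)
    · exact hne rfl
    · exact hfar (col_self h p0)
  have hdisj : Disjoint Dp Far := by
    rw [Set.disjoint_left]
    rintro u ⟨hcol', -⟩ hfar
    exact hfar hcol'
  have : (Set.univ : Set P).ncard = 1 + ((t + 1) * s + s * s * t) := by
    rw [huniv, Set.ncard_insert_of_notMem hp0nm (Set.toFinite _),
      Set.ncard_union_eq hdisj (Set.toFinite _) (Set.toFinite _), hDpcard, hFarcard]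
    omega
  rw [← Set.ncard_univ, this]
  ring

end Generic

/-! ### Lemmas specific to the doubly subtended configuration -/

section Main

variable {P L : Type*} [Fintype P] [Fintype L] {I : P → L → Prop} {q : ℕ}
  {P' : Set P} {L' : Set L}

/-- Common neighbours of two non-collinear points of the subquadrangle lie in the
subquadrangle. -/
theorem sub_closed (hΓ : GenQuad P L I (q ^ 2) q)
    (hsub : GenQuad P' L' (fun p l => I p.1 l.1) q q)
    {r1 r2 : P} (h1 : r1 ∈ P') (h2 : r2 ∈ P') (hnc : ¬ Col I r1 r2)
    {u : P} (hu1 : Col I u r1) (hu2 : Col I u r2) : u ∈ P' := by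
  have hCN : {v : P | Col I v r1 ∧ Col I v r2}.ncard = q + 1 := cn_ncard hΓ hnc
  have hnc' : ¬ Col (fun (p : P') (l : L') => I p.1 l.1) ⟨r1, h1⟩ ⟨r2, h2⟩ := by
    rintro ⟨l, ha, hb⟩
    exact hnc ⟨l.1, ha, hb⟩
  have hCN' := cn_ncard hsub hnc'
  set CNs := {v : P' | Col (fun (p : P') (l : L') => I p.1 l.1) v ⟨r1, h1⟩ ∧
      Col (fun (p : P') (l : L') => I p.1 l.1) v ⟨r2, h2⟩} with hCNsdef
  have himg : Subtype.val '' CNs ⊆ {v : P | Col I v r1 ∧ Col I v r2} := by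
    rintro _ ⟨v, ⟨⟨l, hva, hra⟩, ⟨l', hvb, hrb⟩⟩, rfl⟩
    exact ⟨⟨l.1, hva, hra⟩, ⟨l'.1, hvb, hrb⟩⟩
  have hcard : {v : P | Col I v r1 ∧ Col I v r2}.ncard ≤ (Subtype.val '' CNs).ncard := by
    rw [Set.ncard_image_of_injective _ Subtype.val_injective, hCN', hCN]
  have heq := Set.eq_of_subset_of_ncard_le himg hcard (Set.toFinite _)
  have humem : u ∈ {v : P | Col I v r1 ∧ Col I v r2} := ⟨hu1, hu2⟩
  rw [← heq] at humem
  obtain ⟨v, -, rfl⟩ := humem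
  exact v.2

/-- An external point is collinear with at most `q+1` points of the subquadrangle. -/
theorem col_bound (hq : 2 ≤ q) (hΓ : GenQuad P L I (q ^ 2) q)
    (hsub : GenQuad P' L' (fun p l => I p.1 l.1) q q)
    (hlines : ∀ p ∈ P', ∀ l : L, I p l → l ∈ L')
    {u : P} (hu : u ∉ P') :
    {r : P | r ∈ P' ∧ Col I u r}.ncard ≤ q + 1 := by
  classical
  rcases Set.eq_empty_or_nonempty {r : P | r ∈ P' ∧ Col I u r} with he | hne
  · rw [he]; simp
  · obtain ⟨r1, hr1P, l1, hul1, hr1l1⟩ := hne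
    have hl1L : l1 ∈ L' := hlines r1 hr1P l1 hr1l1
    have hsubl : {r : P | r ∈ P' ∧ Col I u r} ⊆ {p : P | p ∈ P' ∧ I p l1} := by
      rintro r ⟨hrP, l2, hul2, hrl2⟩
      refine ⟨hrP, ?_⟩
      by_cases hll : l2 = l1
      · rwa [hll] at hrl2
      · exfalso
        have hr1u : r1 ≠ u := fun he' => hu (he' ▸ hr1P)
        have hr1l2 : ¬ I r1 l2 := by
          intro hc
          exact hll (hΓ.unique_line hr1u hc hul2 hr1l1 hul1)
        have hl2L : l2 ∈ L' := hlines r hrP l2 hrl2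
        have hcard2 : 1 < {p : P' | I p.1 (⟨l2, hl2L⟩ : L').1}.ncard := by
          rw [hsub.line_points ⟨l2, hl2L⟩]; omega
        obtain ⟨a, ha, b, hb, hab⟩ := (Set.one_lt_ncard (Set.toFinite _)).1 hcard2
        have hal2 : I a.1 l2 := ha
        have hbl2 : I b.1 l2 := hb
        have hnc : ¬ Col I r1 a.1 ∨ ¬ Col I r1 b.1 := by
          by_contra hcc
          push_neg at hcc
          exact hab (Subtype.ext (feet_unique hΓ hr1l2 hal2 hbl2 hcc.1 hcc.2))
        rcases hnc with hnca | hncb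
        · exact hu (sub_closed hΓ hsub hr1P a.2 hnca ⟨l1, hul1, hr1l1⟩ ⟨l2, hul2, hal2⟩)
        · exact hu (sub_closed hΓ hsub hr1P b.2 hncb ⟨l1, hul1, hr1l1⟩ ⟨l2, hul2, hbl2⟩)
    have hle := Set.ncard_le_ncard hsubl (Set.toFinite _)
    have himg : {p : P | p ∈ P' ∧ I p l1} = Subtype.val '' {p : P' | I p.1 (⟨l1, hl1L⟩ : L').1} := by
      ext p
      constructor
      · rintro ⟨hp, hI⟩
        exact ⟨⟨p, hp⟩, hI, rfl⟩
      · rintro ⟨⟨p', hp'⟩, hI, rfl⟩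
        exact ⟨hp', hI⟩
    rwa [himg, Set.ncard_image_of_injective _ Subtype.val_injective,
      hsub.line_points ⟨l1, hl1L⟩] at hle

/-- Key lemma: every point is collinear with a point of the subquadrangle. -/
theorem key_lemma (hq : 2 ≤ q) (hΓ : GenQuad P L I (q ^ 2) q) (hPne : P'.Nonempty)
    (hsub : GenQuad P' L' (fun p l => I p.1 l.1) q q)
    (hlines : ∀ p ∈ P', ∀ l : L, I p l → l ∈ L')
    (x : P) : ∃ r ∈ P', Col I x r := by
  classical
  by_cases hx : x ∈ P'
  · exact ⟨x, hx, col_self hΓ x⟩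
  by_contra hcon
  push_neg at hcon
  have hcon' : ∀ r ∈ P', ¬ Col I x r := hcon
  set D := {u : P | Col I u x ∧ u ≠ x} with hDdef
  have hDcard : D.ncard = (q + 1) * q ^ 2 := by
    have := perp_ncard hΓ x
    rw [hDdef]
    omega
  have hrow : ∀ r ∈ P', {u : P | u ∈ D ∧ Col I u r}.ncard = q + 1 := by
    intro r hr
    have hset : {u : P | u ∈ D ∧ Col I u r} = {u : P | Col I u x ∧ Col I u r} := by
      ext u
      constructor
      · rintro ⟨⟨h1, -⟩, h2⟩
        exact ⟨h1, h2⟩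
      · rintro ⟨h1, h2⟩
        refine ⟨⟨h1, ?_⟩, h2⟩
        rintro rfl
        exact hcon' r hr h2
    rw [hset]
    exact cn_ncard hΓ (hcon' r hr)
  have hcolb : ∀ u ∈ D, {r : P | r ∈ P' ∧ Col I u r}.ncard ≤ q + 1 := by
    intro u hu
    have huP : u ∉ P' := fun huP => hcon' u huP (Col.symm hu.1)
    exact col_bound hq hΓ hsub hlines huP
  have hineq : P'.ncard * (q + 1) ≤ D.ncard * (q + 1) :=
    double_count_le (rel := fun r u => Col I u r) hrow hcolb
  have hPle : P'.ncard ≤ (q + 1) * q ^ 2 := by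
    rw [hDcard] at hineq
    exact Nat.le_of_mul_le_mul_right hineq (Nat.succ_pos q)
  have hPcard : P'.ncard = (q + 1) * (q * q + 1) := by
    obtain ⟨p0, hp0⟩ := hPne
    have := point_count hsub ⟨p0, hp0⟩
    rw [← Nat.card_coe_set_eq]
    exact this
  rw [hPcard, pow_two] at hPle
  have := Nat.le_of_mul_le_mul_left hPle (Nat.succ_pos q)
  omega

variable {σP : P ≃ P} {σL : L ≃ L}

/-- Lines meeting the subquadrangle are fixed by the involution. -/
theorem fix_line (hq : 2 ≤ q) (hΓ : GenQuad P L I (q ^ 2) q)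
    (hsub : GenQuad P' L' (fun p l => I p.1 l.1) q q)
    (hlines : ∀ p ∈ P', ∀ l : L, I p l → l ∈ L')
    (hσI : ∀ (p : P) (l : L), I p l ↔ I (σP p) (σL l))
    (hσfix : ∀ p ∈ P', σP p = p)
    {l : L} {r : P} (hr : r ∈ P') (hrl : I r l) : σL l = l := by
  have hlL : l ∈ L' := hlines r hr l hrl
  have hcard2 : 1 < {p : P' | I p.1 (⟨l, hlL⟩ : L').1}.ncard := by
    rw [hsub.line_points ⟨l, hlL⟩]; omega
  obtain ⟨a, ha, b, hb, hab⟩ := (Set.one_lt_ncard (Set.toFinite _)).1 hcard2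
  have hal : I a.1 l := ha
  have hbl : I b.1 l := hb
  have haσ : I a.1 (σL l) := by
    have := (hσI a.1 l).1 hal
    rwa [hσfix a.1 a.2] at this
  have hbσ : I b.1 (σL l) := by
    have := (hσI b.1 l).1 hbl
    rwa [hσfix b.1 b.2] at this
  have habv : a.1 ≠ b.1 := fun he => hab (Subtype.ext he)
  exact (hΓ.unique_line habv hal hbl haσ hbσ).symm

/-- Every point lies on a line fixed by the involution. -/
theorem fixed_line_through (hq : 2 ≤ q) (hΓ : GenQuad P L I (q ^ 2) q) (hPne : P'.Nonempty)
    (hsub : GenQuad P' L' (fun p l => I p.1 l.1) q q)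
    (hlines : ∀ p ∈ P', ∀ l : L, I p l → l ∈ L')
    (hσI : ∀ (p : P) (l : L), I p l ↔ I (σP p) (σL l))
    (hσfix : ∀ p ∈ P', σP p = p)
    (x : P) : ∃ mline : L, I x mline ∧ σL mline = mline := by
  obtain ⟨r, hr, l, hxl, hrl⟩ := key_lemma hq hΓ hPne hsub hlines x
  exact ⟨l, hxl, fix_line hq hΓ hsub hlines hσI hσfix hr hrl⟩

/-- No line of `R` can be concurrent with an external line `n` while its antipode is
also concurrent with `n`. -/
theorem bad_case (hq : 2 ≤ q) (hΓ : GenQuad P L I (q ^ 2) q) (hPne : P'.Nonempty)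
    (hsub : GenQuad P' L' (fun p l => I p.1 l.1) q q)
    (hlines : ∀ p ∈ P', ∀ l : L, I p l → l ∈ L')
    (hσI : ∀ (p : P) (l : L), I p l ↔ I (σP p) (σL l))
    (hσP2 : ∀ p, σP (σP p) = p) (hσL2 : ∀ l, σL (σL l) = l)
    (hσfix : ∀ p ∈ P', σP p = p)
    (hσmoveL : ∀ l : L, (∀ p ∈ P', ¬ I p l) → σL l ≠ l)
    {k n : L} (hk : ∀ p ∈ P', ¬ I p k) (hn : ∀ p ∈ P', ¬ I p n)
    (h1 : Concurrent I k n) (h2 : Concurrent I n (σL k)) : False := by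
  obtain ⟨hkn, p, hpk, hpn⟩ := h1
  obtain ⟨hnk, qq, hqn, hqk⟩ := h2
  have hIσ : ∀ (a : P) (l : L), I a l → I (σP a) (σL l) := fun a l h => (hσI a l).1 h
  have hmove_k : σL k ≠ k := hσmoveL k hk
  have hmove_n : σL n ≠ n := hσmoveL n hn
  by_cases hfix : σP p = p
  · -- `p` is fixed; it lies on `k`, `σL k` and `n`.
    have hpσk : I p (σL k) := by
      have := hIσ p k hpk
      rwa [hfix] at this
    have h2pt : ∃ y, I y k ∧ y ≠ p := by
      have hcard := hΓ.line_points k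
      have hpos : 0 < q ^ 2 := by positivity
      have h1lt : 1 < {p : P | I p k}.ncard := by rw [hcard]; omega
      obtain ⟨y, hy, hyp⟩ := Set.exists_ne_of_one_lt_ncard h1lt p
      exact ⟨y, hy, hyp⟩
    obtain ⟨y, hyk, hyp⟩ := h2pt
    have hyσ : I (σP y) (σL k) := hIσ y k hyk
    have hy_ne : σP y ≠ y := by
      intro he
      rw [he] at hyσ
      exact hyp (pt_eq hΓ (Ne.symm hmove_k) hyk hyσ hpk hpσk)
    obtain ⟨ml, hyml, hmlfix⟩ := fixed_line_through hq hΓ hPne hsub hlines hσI hσfix y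
    have hσyml : I (σP y) ml := by
      have := hIσ y ml hyml
      rwa [hmlfix] at this
    have hpml : ¬ I p ml := by
      intro hpml
      have hmk : ml = k := hΓ.unique_line hyp hyml hpml hyk hpk
      rw [hmk] at hmlfix
      exact hmove_k hmlfix
    exact hy_ne (feet_unique hΓ hpml hσyml hyml ⟨σL k, hpσk, hyσ⟩ ⟨k, hpk, hyk⟩)
  · -- `p ≠ σP p`.
    have hpσn : I (σP p) (σL n) := hIσ p n hpn
    have hpσk2 : I (σP p) (σL k) := hIσ p k hpk
    have hσpp : σP p ≠ p := hfix
    have hσpn : ¬ I (σP p) n := by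
      intro hcon2
      have hpσn2 : I p (σL n) := by
        have := hIσ (σP p) n hcon2
        rwa [hσP2 p] at this
      exact hmove_n (hΓ.unique_line hσpp hcon2 hpn hpσn hpσn2).symm
    have hqp : qq ≠ p := by
      rintro rfl
      have hσpk : I (σP qq) k := by
        have := hIσ qq (σL k) hqk
        rwa [hσL2 k] at this
      exact hmove_k (hΓ.unique_line hσpp hσpk hpk hpσk2 hqk).symm
    obtain ⟨ml, hpml, hmlfix⟩ := fixed_line_through hq hΓ hPne hsub hlines hσI hσfix p
    have hσpml : I (σP p) ml := by
      have := hIσ p ml hpml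
      rwa [hmlfix] at this
    exact hqp (feet_unique hΓ hσpn hqn hpn ⟨σL k, hpσk2, hqk⟩ ⟨ml, hσpml, hpml⟩)

end Main

end RelCoverAux

open scoped Classical in
/-- If `R` is a relative `m`-cover and `σ = (σP, σL)` the involution swapping antipodes
(`σL k` is the antipode of an external line `k`), then
`χ_R · A₁ = m(q²+1) j - (q²+1) χ_{R^σ}` on external lines, where `A₁` is the 0-1 matrix
with `(k,n)`-entry 1 iff `k` and `n` are not concurrent, `n` is not the antipode of `k`,
and `n` is concurrent with the antipode of `k`. -/
theorem statement_15 {P L : Type*} [Fintype P] [Fintype L] {I : P → L → Prop} {q m : ℕ}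
    (hq : 2 ≤ q)
    (hΓ : GenQuad P L I (q ^ 2) q)
    (P' : Set P) (L' : Set L) (hPne : P'.Nonempty)
    (hPproper : P' ≠ Set.univ) (hLproper : L' ≠ Set.univ)
    (hsub : GenQuad P' L' (fun p l => I p.1 l.1) q q)
    (hlines : ∀ p ∈ P', ∀ l : L, I p l → l ∈ L')
    (σP : P ≃ P) (σL : L ≃ L)
    (hσI : ∀ (p : P) (l : L), I p l ↔ I (σP p) (σL l))
    (hσP2 : ∀ p, σP (σP p) = p) (hσL2 : ∀ l, σL (σL l) = l)
    (hσfix : ∀ p ∈ P', σP p = p)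
    (hσmoveL : ∀ l : L, (∀ p ∈ P', ¬ I p l) → σL l ≠ l)
    (R : Set L) (hRext : ∀ l ∈ R, ∀ p ∈ P', ¬ I p l)
    (hcover : ∀ p : P, p ∉ P' → {l ∈ R | I p l}.ncard = m) :
    ∀ n : L, (∀ p ∈ P', ¬ I p n) →
      (∑ k : L, (if k ∈ R then (1 : ℝ) else 0) *
          (if (∀ p ∈ P', ¬ I p k) ∧ ¬ Concurrent I k n ∧ n ≠ σL k ∧
              Concurrent I n (σL k) then (1 : ℝ) else 0))
        = m * (q ^ 2 + 1) - (q ^ 2 + 1) * (if n ∈ σL '' R then (1 : ℝ) else 0) := by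
  intro n hn
  classical
  -- Step 1: the sum counts the lines `k ∈ R` with `Concurrent I n (σL k)`.
  have hterm : ∀ k : L, (if k ∈ R then (1 : ℝ) else 0) *
      (if (∀ p ∈ P', ¬ I p k) ∧ ¬ Concurrent I k n ∧ n ≠ σL k ∧
          Concurrent I n (σL k) then (1 : ℝ) else 0)
      = if (k ∈ R ∧ Concurrent I n (σL k)) then (1 : ℝ) else 0 := by
    intro k
    by_cases h1 : k ∈ R
    · by_cases h2 : Concurrent I n (σL k)
      · have hbig : (∀ p ∈ P', ¬ I p k) ∧ ¬ Concurrent I k n ∧ n ≠ σL k ∧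
            Concurrent I n (σL k) := by
          refine ⟨hRext k h1, ?_, h2.1, h2⟩
          intro hc
          exact RelCoverAux.bad_case hq hΓ hPne hsub hlines hσI hσP2 hσL2 hσfix hσmoveL
            (hRext k h1) hn hc h2
        have hpair : k ∈ R ∧ Concurrent I n (σL k) := ⟨h1, h2⟩
        rw [if_pos h1, if_pos hbig, if_pos hpair, one_mul]
      · have hnbig : ¬ ((∀ p ∈ P', ¬ I p k) ∧ ¬ Concurrent I k n ∧ n ≠ σL k ∧
            Concurrent I n (σL k)) := fun hc => h2 hc.2.2.2
        have hnpair : ¬ (k ∈ R ∧ Concurrent I n (σL k)) := fun hc => h2 hc.2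
        rw [if_pos h1, if_neg hnbig, if_neg hnpair, one_mul]
    · have hnpair : ¬ (k ∈ R ∧ Concurrent I n (σL k)) := fun hc => h1 hc.1
      rw [if_neg h1, if_neg hnpair, zero_mul]
  rw [Finset.sum_congr rfl fun k _ => hterm k, ← Finset.sum_filter, Finset.sum_const,
    nsmul_eq_mul, mul_one]
  -- Step 2: pair each such line with its intersection point on `n`.
  set Xnf := Finset.univ.filter (fun x : P => I x n) with hXnfdef
  have hXcard : Xnf.card = q ^ 2 + 1 := by
    have hnp := hΓ.line_points n
    rw [Set.ncard_eq_toFinset_card _ (Set.toFinite _)] at hnp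
    rw [← hnp]
    congr 1
    ext x
    simp [hXnfdef, Set.Finite.mem_toFinset]
  set PairsF := (Xnf ×ˢ (Finset.univ : Finset L)).filter
      (fun z : P × L => z.2 ∈ R ∧ σL z.2 ≠ n ∧ I z.1 (σL z.2)) with hPairsdef
  have hbij : PairsF.card
      = (Finset.univ.filter (fun k : L => k ∈ R ∧ Concurrent I n (σL k))).card := by
    apply Finset.card_bij (fun z _ => z.2)
    · rintro ⟨x, k⟩ hz
      simp only [hPairsdef, Finset.mem_filter, Finset.mem_product, hXnfdef,
        Finset.mem_univ, true_and, and_true] at hz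
      obtain ⟨hx, hkR, hkne, hxk⟩ := hz
      simp only [Finset.mem_filter, Finset.mem_univ, true_and]
      exact ⟨hkR, Ne.symm hkne, x, hx, hxk⟩
    · rintro ⟨x, k⟩ hz ⟨x', k'⟩ hz' hkk
      simp only at hkk
      subst hkk
      simp only [hPairsdef, Finset.mem_filter, Finset.mem_product, hXnfdef,
        Finset.mem_univ, true_and, and_true] at hz hz'
      obtain ⟨hx, hkR, hkne, hxk⟩ := hz
      obtain ⟨hx', -, -, hxk'⟩ := hz'
      have hxx : x = x' := RelCoverAux.pt_eq hΓ (Ne.symm hkne) hx hxk hx' hxk'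
      rw [hxx]
    · intro k hk
      simp only [Finset.mem_filter, Finset.mem_univ, true_and] at hk
      obtain ⟨hkR, hne, x, hxn, hxk⟩ := hk
      refine ⟨(x, k), ?_, rfl⟩
      simp only [hPairsdef, Finset.mem_filter, Finset.mem_product, hXnfdef,
        Finset.mem_univ, true_and, and_true]
      exact ⟨hxn, hkR, Ne.symm hne, hxk⟩
  -- Step 3: count the pairs fiberwise over the points of `n`.
  have hfib : PairsF.card = ∑ x ∈ Xnf,
      (Finset.univ.filter (fun k : L => k ∈ R ∧ σL k ≠ n ∧ I x (σL k))).card := by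
    rw [hPairsdef, Finset.card_filter, Finset.sum_product]
    refine Finset.sum_congr rfl fun x _ => ?_
    rw [Finset.card_filter]
  -- Step 4: each fiber has `m - [σL n ∈ R]` elements.
  have hper : ∀ x ∈ Xnf,
      (Finset.univ.filter (fun k : L => k ∈ R ∧ σL k ≠ n ∧ I x (σL k))).card
      = m - (if σL n ∈ R then 1 else 0) := by
    intro x hx
    have hxn : I x n := by
      simpa [hXnfdef] using hx
    have hxP : x ∉ P' := fun hxP => hn x hxP hxn
    have hσxP : σP x ∉ P' := by
      intro hc
      have h1 := hσfix (σP x) hc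
      rw [hσP2 x] at h1
      rw [← h1] at hc
      exact hxP hc
    have hAset := hcover (σP x) hσxP
    set Af := Finset.univ.filter (fun k : L => k ∈ R ∧ I (σP x) k) with hAfdef
    have hAcard : Af.card = m := by
      rw [Set.ncard_eq_toFinset_card _ (Set.toFinite _)] at hAset
      rw [← hAset]
      congr 1
      ext k
      simp [hAfdef, Set.Finite.mem_toFinset]
    have hIiff : ∀ k : L, I x (σL k) ↔ I (σP x) k := by
      intro k
      rw [hσI x (σL k), hσL2 k]
    have hne_iff : ∀ k : L, σL k ≠ n ↔ k ≠ σL n := by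
      intro k
      constructor
      · intro h hk
        exact h (by rw [hk, hσL2])
      · intro h hk
        exact h (by rw [← hk, hσL2])
    have hfilter_eq : Finset.univ.filter (fun k : L => k ∈ R ∧ σL k ≠ n ∧ I x (σL k))
        = Af.erase (σL n) := by
      ext k
      simp only [Finset.mem_erase, Finset.mem_filter, Finset.mem_univ, true_and, hAfdef]
      constructor
      · rintro ⟨h1, h2, h3⟩
        exact ⟨(hne_iff k).1 h2, h1, (hIiff k).1 h3⟩
      · rintro ⟨h1, h2, h3⟩
        exact ⟨h2, (hne_iff k).2 h1, (hIiff k).2 h3⟩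
    rw [hfilter_eq]
    by_cases hσnR : σL n ∈ R
    · have hmem : σL n ∈ Af := by
        simp only [hAfdef, Finset.mem_filter, Finset.mem_univ, true_and]
        refine ⟨hσnR, ?_⟩
        have := (hσI x n).1 hxn
        exact this
      rw [Finset.card_erase_of_mem hmem, hAcard, if_pos hσnR]
    · have hmem : σL n ∉ Af := by
        simp only [hAfdef, Finset.mem_filter, Finset.mem_univ, true_and, not_and]
        intro hc
        exact absurd hc hσnR
      rw [Finset.erase_eq_of_notMem hmem, hAcard, if_neg hσnR]
      omega
  have htot : PairsF.card = (q ^ 2 + 1) * (m - (if σL n ∈ R then 1 else 0)) := by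
    rw [hfib, Finset.sum_congr rfl hper, Finset.sum_const, smul_eq_mul, hXcard]
  -- Step 5: conclude.
  have hiff_img : (n ∈ σL '' R) ↔ σL n ∈ R := by
    constructor
    · rintro ⟨k, hk, rfl⟩
      rwa [hσL2 k]
    · intro h
      exact ⟨σL n, h, hσL2 n⟩
  rw [← hbij, htot]
  by_cases hσnR : σL n ∈ R
  · have hm1 : 1 ≤ m := by
      obtain ⟨x, hxn⟩ : ∃ x : P, I x n := by
        have hnp := hΓ.line_points n
        have : {p : P | I p n}.Nonempty :=
          Set.nonempty_of_ncard_ne_zero (by rw [hnp]; omega)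
        exact this
      have hxP : x ∉ P' := fun hxP => hn x hxP hxn
      have hσxP : σP x ∉ P' := by
        intro hc
        have h1 := hσfix (σP x) hc
        rw [hσP2 x] at h1
        rw [← h1] at hc
        exact hxP hc
      have hAset := hcover (σP x) hσxP
      have hnonempty : {l : L | l ∈ R ∧ I (σP x) l}.Nonempty :=
        ⟨σL n, hσnR, (hσI x n).1 hxn⟩
      have hpos : 0 < {l : L | l ∈ R ∧ I (σP x) l}.ncard :=
        (Set.ncard_pos (Set.toFinite _)).2 hnonempty
      rw [hAset] at hpos
      exact hpos
    rw [if_pos hσnR, if_pos (hiff_img.2 hσnR)]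
    push_cast [Nat.cast_sub hm1]
    ring
  · rw [if_neg hσnR, if_neg (fun hc => hσnR (hiff_img.1 hc))]
    rw [Nat.sub_zero]
    push_cast
    ring
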